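/- Let n ≥ 4 be even, and let f(x,y) = f₀xⁿ + f₁xⁿ⁻¹y + ⋯ + fₙyⁿ be an integral binary n-ic form with f₀ ≠ 0 and with fₙ = c² for some c ∈ ℤ. Let K = ℚ[x]/(f(x,1)), let θ be the image of x in K, and for 1 ≤ k ≤ n−1 set ζ_k = f₀θ^k + f₁θ^{k−1} + ⋯ + f_{k−1}θ ∈ K. Let I be the ℤ-submodule of K spanned by {c, θ, θ², …, θ^{(n−2)/2}, ζ_{n/2}, ζ_{n/2+1}, …, ζ_{n−1}}. Then the product of any two elements of I lies in the ℤ-submodule of K spanned by {c², θ, θ², …, θ^{n−2}, f₀θ^{n−1}}; i.e., I·I ⊆ span_ℤ{c², θ, θ², …, θ^{n−2}, f₀θ^{n−1}}. -/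

import Mathlib

noncomputable section

/-- The dehomogenization `f(x,1) = f₀xⁿ + f₁xⁿ⁻¹ + ⋯ + fₙ` of an integral binary
`n`-ic form with coefficients `f 0, …, f n`, as a polynomial over `ℚ`. -/
def fPoly (n : ℕ) (f : ℕ → ℤ) : Polynomial ℚ :=
  ∑ i ∈ Finset.range (n + 1), Polynomial.C ((f i : ℚ)) * Polynomial.X ^ (n - i)

/-- The algebra `K = ℚ[x]/(f(x,1))`. -/
abbrev Kf (n : ℕ) (f : ℕ → ℤ) : Type _ := AdjoinRoot (fPoly n f)

/-- The image of an integer in `K`. -/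
def ι (n : ℕ) (f : ℕ → ℤ) (m : ℤ) : Kf n f := algebraMap ℚ (Kf n f) (m : ℚ)

/-- Wood's basis element `ζ_k = f₀θ^k + f₁θ^{k−1} + ⋯ + f_{k−1}θ`. -/
def zeta (n : ℕ) (f : ℕ → ℤ) (k : ℕ) : Kf n f :=
  ∑ j ∈ Finset.range k, ι n f (f j) * (AdjoinRoot.root (fPoly n f)) ^ (k - j)

/-- The generating set `{c, θ, θ², …, θ^{(n−2)/2}, ζ_{n/2}, …, ζ_{n−1}}` of `I`. -/
def Igens (n : ℕ) (f : ℕ → ℤ) (c : ℤ) : Set (Kf n f) :=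
  {x | x = ι n f c ∨
    (∃ i : ℕ, 1 ≤ i ∧ i ≤ (n - 2) / 2 ∧ x = (AdjoinRoot.root (fPoly n f)) ^ i) ∨
    (∃ k : ℕ, n / 2 ≤ k ∧ k ≤ n - 1 ∧ x = zeta n f k)}

/-- The generating set `{c², θ, θ², …, θ^{n−2}, f₀θ^{n−1}}` of `θ·I_f^{n−3}`. -/
def Tgens (n : ℕ) (f : ℕ → ℤ) (c : ℤ) : Set (Kf n f) :=
  {x | x = ι n f (c ^ 2) ∨
    (∃ i : ℕ, 1 ≤ i ∧ i ≤ n - 2 ∧ x = (AdjoinRoot.root (fPoly n f)) ^ i) ∨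
    x = ι n f (f 0) * (AdjoinRoot.root (fPoly n f)) ^ (n - 1)}
namespace BW

variable (n : ℕ) (f : ℕ → ℤ) (c : ℤ)

local notation "θ" => AdjoinRoot.root (fPoly n f)
local notation "T" => Submodule.span ℤ (Tgens n f c)

lemma iota_eq (m : ℤ) : ι n f m = (m : Kf n f) := by
  simp [ι]

lemma iota_mul_eq_smul (m : ℤ) (x : Kf n f) : ι n f m * x = m • x := by
  rw [iota_eq, ← zsmul_eq_mul]

lemma sum_rel : ∑ j ∈ Finset.range (n+1), ι n f (f j) * θ ^ (n-j) = 0 := by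
  have h := AdjoinRoot.eval₂_root (fPoly n f)
  rw [fPoly] at h
  simp only [Polynomial.eval₂_finset_sum, Polynomial.eval₂_mul, Polynomial.eval₂_C,
    Polynomial.eval₂_X_pow] at h
  simp [ι, AdjoinRoot.algebraMap_eq] at h ⊢
  exact h

lemma zeta_succ (k : ℕ) : zeta n f (k+1) = θ * zeta n f k + ι n f (f k) * θ := by
  rw [zeta, zeta, Finset.sum_range_succ, Finset.mul_sum]
  congr 1
  · apply Finset.sum_congr rfl
    intro j hj
    have hj' : j < k := Finset.mem_range.1 hj
    have h1 : k + 1 - j = (k - j) + 1 := by omega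
    rw [h1, pow_succ]
    ring
  · simp

lemma zeta_n : zeta n f n = - ι n f (f n) := by
  have h := sum_rel n f
  rw [Finset.sum_range_succ] at h
  simp only [Nat.sub_self, pow_zero, mul_one] at h
  rw [zeta]
  linear_combination h

lemma powMulZeta (m : ℕ) : ∀ l : ℕ,
    θ ^ m * zeta n f l
      = zeta n f (l + m) - ∑ t ∈ Finset.range m, ι n f (f (l + m - (t+1))) * θ ^ (t+1) := by
  induction m with
  | zero => intro l; simp
  | succ m ih =>
    intro l
    have h1 : θ ^ (m+1) * zeta n f l = θ ^ m * (θ * zeta n f l) := by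
      rw [pow_succ]; ring
    have h2 : θ * zeta n f l = zeta n f (l+1) - ι n f (f l) * θ := by
      rw [zeta_succ]; ring
    rw [h1, h2, mul_sub, ih (l+1)]
    rw [Finset.sum_range_succ]
    have hidx : ∀ t : ℕ, l + 1 + m - (t+1) = l + (m+1) - (t+1) := by intro t; omega
    have hlm : l + 1 + m = l + (m + 1) := by omega
    have hmm : l + (m+1) - (m+1) = l := by omega
    rw [hlm, hmm]
    ring

-- membership helpers
lemma memT_c2 : ι n f (c^2) ∈ T := Submodule.subset_span (Or.inl rfl)

lemma memT_pow {i : ℕ} (h1 : 1 ≤ i) (h2 : i ≤ n - 2) : θ ^ i ∈ T :=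
  Submodule.subset_span (Or.inr (Or.inl ⟨i, h1, h2, rfl⟩))

lemma memT_top : ι n f (f 0) * θ ^ (n-1) ∈ T :=
  Submodule.subset_span (Or.inr (Or.inr rfl))

lemma smul_iota_mem {x : Kf n f} (m : ℤ) (hx : x ∈ T) : ι n f m * x ∈ T := by
  rw [iota_mul_eq_smul]; exact Submodule.smul_mem _ m hx

lemma zeta_mem (hn : 4 ≤ n) {t : ℕ} (h1 : 1 ≤ t) (h2 : t ≤ n - 1) : zeta n f t ∈ T := by
  rw [zeta]
  apply Submodule.sum_mem
  intro j hj
  have hj' : j < t := Finset.mem_range.1 hj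
  by_cases h : t - j ≤ n - 2
  · exact smul_iota_mem n f c _ (memT_pow n f c (by omega) h)
  · have hj0 : j = 0 := by omega
    have htj : t - j = n - 1 := by omega
    rw [htj, hj0]
    exact memT_top n f c

lemma powMulZeta_mem (hn : 4 ≤ n) (hc : f n = c^2) {m l : ℕ}
    (hm1 : 1 ≤ m) (hm2 : m ≤ n - 2) (hl1 : n/2 ≤ l) (hl2 : l ≤ n - 1) :
    θ ^ m * zeta n f l ∈ T := by
  by_cases hcase : l + m ≤ n
  · rw [powMulZeta]
    apply Submodule.sub_mem
    · by_cases h : l + m = n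
      · rw [h, zeta_n, hc]
        exact Submodule.neg_mem _ (memT_c2 n f c)
      · exact zeta_mem n f c hn (by omega) (by omega)
    · apply Submodule.sum_mem
      intro t ht
      have ht' : t < m := Finset.mem_range.1 ht
      exact smul_iota_mem n f c _ (memT_pow n f c (by omega) (by omega))
  · -- overflow: m = (n - l) + r with r = l + m - n ≥ 1
    set r := l + m - n with hr
    have hm : m = (n - l) + r := by omega
    rw [hm, pow_add, mul_comm (θ ^ (n-l)) (θ ^ r), mul_assoc, powMulZeta]
    have hn' : l + (n - l) = n := by omega
    rw [hn', zeta_n, hc]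
    rw [mul_sub, Finset.mul_sum]
    apply Submodule.sub_mem
    · rw [mul_neg, iota_eq, mul_comm]
      rw [← zsmul_eq_mul]
      exact Submodule.neg_mem _ (Submodule.smul_mem _ _ (memT_pow n f c (by omega) (by omega)))
    · apply Submodule.sum_mem
      intro t ht
      have ht' : t < n - l := Finset.mem_range.1 ht
      have : θ ^ r * (ι n f (f (n - (t+1))) * θ ^ (t+1))
          = ι n f (f (n - (t+1))) * θ ^ (t+1+r) := by
        rw [pow_add]; ring
      rw [this]
      exact smul_iota_mem n f c _ (memT_pow n f c (by omega) (by omega))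

lemma topMulZeta_mem (hn : 4 ≤ n) (hc : f n = c^2) {l : ℕ}
    (hl1 : n/2 ≤ l) (hl2 : l ≤ n - 1) :
    ι n f (f 0) * (θ ^ (n-1) * zeta n f l) ∈ T := by
  have hl2' : 2 ≤ l := by omega
  have hm : n - 1 = (n - l) + (l - 1) := by omega
  rw [hm, pow_add, mul_comm (θ ^ (n-l)) (θ ^ (l-1)), mul_assoc, powMulZeta]
  have hn' : l + (n - l) = n := by omega
  rw [hn', zeta_n, hc]
  rw [mul_sub, Finset.mul_sum, mul_sub, Finset.mul_sum]
  apply Submodule.sub_mem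
  · have : ι n f (f 0) * (θ ^ (l-1) * -ι n f (c^2)) = ι n f (f 0 * c^2) * θ ^ (l-1) * (-1) := by
      simp only [ι]; push_cast; ring
    rw [this]
    rw [mul_neg_one]
    exact Submodule.neg_mem _ (smul_iota_mem n f c _ (memT_pow n f c (by omega) (by omega)))
  · apply Submodule.sum_mem
    intro t ht
    have ht' : t < n - l := Finset.mem_range.1 ht
    by_cases htop : t = n - l - 1
    · -- exponent (t+1)+(l-1) = n-1, coefficient f l
      have hidx : n - (t+1) = l := by omega
      have : ι n f (f 0) * (θ ^ (l-1) * (ι n f (f (n - (t+1))) * θ ^ (t+1)))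
          = ι n f (f (n - (t+1))) * (ι n f (f 0) * θ ^ (t+1+(l-1))) := by
        rw [pow_add]; ring
      rw [this]
      have hexp : t + 1 + (l-1) = n - 1 := by omega
      rw [hexp]
      exact smul_iota_mem n f c _ (memT_top n f c)
    · have : ι n f (f 0) * (θ ^ (l-1) * (ι n f (f (n - (t+1))) * θ ^ (t+1)))
          = ι n f (f 0 * f (n - (t+1))) * θ ^ (t+1+(l-1)) := by
        simp only [ι]; push_cast; rw [pow_add]; ring
      rw [this]
      exact smul_iota_mem n f c _ (memT_pow n f c (by omega) (by omega))

end BW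

theorem ideal_square_containment (n : ℕ) (hn : 4 ≤ n) (he : Even n)
    (f : ℕ → ℤ) (hf0 : f 0 ≠ 0) (c : ℤ) (hc : f n = c ^ 2) :
    ∀ a ∈ Submodule.span ℤ (Igens n f c), ∀ b ∈ Submodule.span ℤ (Igens n f c),
      a * b ∈ Submodule.span ℤ (Tgens n f c) := by
  intro a ha b hb
  have hpar : n % 2 = 0 := Nat.even_iff.mp he
  set θ := AdjoinRoot.root (fPoly n f) with hθ
  have key : ∀ x ∈ Igens n f c, ∀ y ∈ Igens n f c,
      x * y ∈ Submodule.span ℤ (Tgens n f c) := by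
    intro x hx y hy
    simp only [Igens, Set.mem_setOf_eq] at hx hy
    -- multiplication by c
    have hcy : ∀ y, (y = ι n f c ∨
        (∃ i : ℕ, 1 ≤ i ∧ i ≤ (n - 2) / 2 ∧ y = θ ^ i) ∨
        (∃ k : ℕ, n / 2 ≤ k ∧ k ≤ n - 1 ∧ y = zeta n f k)) →
        ι n f c * y ∈ Submodule.span ℤ (Tgens n f c) := by
      rintro y (rfl | ⟨i, hi1, hi2, rfl⟩ | ⟨k, hk1, hk2, rfl⟩)
      · have h : ι n f c * ι n f c = ι n f (c^2) := by
          simp only [ι, ← map_mul]; push_cast; ring_nf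
        rw [h]; exact BW.memT_c2 n f c
      · exact BW.smul_iota_mem n f c _ (BW.memT_pow n f c hi1 (by omega))
      · exact BW.smul_iota_mem n f c _ (BW.zeta_mem n f c hn (by omega) hk2)
    -- multiplication by θ^i
    have hpy : ∀ i : ℕ, 1 ≤ i → i ≤ (n-2)/2 → ∀ y, (y = ι n f c ∨
        (∃ j : ℕ, 1 ≤ j ∧ j ≤ (n - 2) / 2 ∧ y = θ ^ j) ∨
        (∃ k : ℕ, n / 2 ≤ k ∧ k ≤ n - 1 ∧ y = zeta n f k)) →
        θ ^ i * y ∈ Submodule.span ℤ (Tgens n f c) := by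
      rintro i hi1 hi2 y (rfl | ⟨j, hj1, hj2, rfl⟩ | ⟨k, hk1, hk2, rfl⟩)
      · rw [mul_comm]
        exact BW.smul_iota_mem n f c _ (BW.memT_pow n f c hi1 (by omega))
      · rw [← pow_add]
        exact BW.memT_pow n f c (by omega) (by omega)
      · exact BW.powMulZeta_mem n f c hn hc hi1 (by omega) hk1 hk2
    obtain rfl | ⟨i, hi1, hi2, rfl⟩ | ⟨k, hk1, hk2, rfl⟩ := hx
    · exact hcy y hy
    · exact hpy i hi1 hi2 y hy
    · obtain rfl | ⟨i, hi1, hi2, rfl⟩ | ⟨l, hl1, hl2, rfl⟩ := hy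
      · rw [mul_comm]; exact hcy _ (Or.inr (Or.inr ⟨k, hk1, hk2, rfl⟩))
      · rw [mul_comm]; exact hpy i hi1 hi2 _ (Or.inr (Or.inr ⟨k, hk1, hk2, rfl⟩))
      · -- ζ_k * ζ_l
        rw [zeta, Finset.sum_mul]
        apply Submodule.sum_mem
        intro j hj
        have hj' : j < k := Finset.mem_range.1 hj
        rw [mul_assoc]
        by_cases h : k - j ≤ n - 2
        · exact BW.smul_iota_mem n f c _
            (BW.powMulZeta_mem n f c hn hc (by omega) h hl1 hl2)
        · have hj0 : j = 0 := by omega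
          have hkj : k - j = n - 1 := by omega
          rw [hkj, hj0]
          exact BW.topMulZeta_mem n f c hn hc hl1 hl2
  have hmul := Submodule.mul_mem_mul ha hb
  rw [Submodule.span_mul_span] at hmul
  refine Submodule.span_le.2 ?_ hmul
  rintro _ ⟨x, hx, y, hy, rfl⟩
  exact key x hx y hy
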